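/- (Lemma 1) Let a > 0, b > 0 be real numbers, set c = (1 + e^{a b})/e^{a b} and d = 1/(1 + e^{a b}), and define U(P) = c·(1/(1 + e^{-a(P-b)}) − d). Then the function P ↦ log U(P) is strictly concave on the open interval (0, ∞). -/

import Mathlib

open Real Set

private lemma log_sigmoidal_aux (a K : ℝ) (ha : 0 < a) (hK : 0 < K) :
    StrictConcaveOn ℝ (Ioi (0 : ℝ))
      (fun P => Real.log (1 - Real.exp (-a*P)) - Real.log (1 + K * Real.exp (-a*P))) := by
  set f : ℝ → ℝ := fun P => Real.log (1 - Real.exp (-a*P)) - Real.log (1 + K * Real.exp (-a*P)) with hf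
  have hpos1 : ∀ x ∈ Ioi (0:ℝ), (0:ℝ) < 1 - Real.exp (-a*x) := by
    intro x hx
    have : Real.exp (-a*x) < 1 := by
      rw [Real.exp_lt_one_iff]; nlinarith [mem_Ioi.mp hx]
    linarith
  have hpos2 : ∀ x : ℝ, (0:ℝ) < 1 + K * Real.exp (-a*x) := by
    intro x; positivity
  have hderiv : ∀ x ∈ Ioi (0:ℝ), HasDerivAt f
      (a / (Real.exp (a*x) - 1) + a*K / (Real.exp (a*x) + K)) x := by
    intro x hx
    have hE : HasDerivAt (fun P : ℝ => Real.exp (-a*P)) (-a * Real.exp (-a*x)) x := by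
      simpa [Function.comp_def, mul_comm] using (Real.hasDerivAt_exp (-a*x)).comp x ((hasDerivAt_id x).const_mul (-a))
    have h1 : HasDerivAt (fun P => Real.log (1 - Real.exp (-a*P)))
        ((a * Real.exp (-a*x)) / (1 - Real.exp (-a*x))) x := by
      have hu : HasDerivAt (fun P : ℝ => 1 - Real.exp (-a*P)) (a * Real.exp (-a*x)) x := by
        simpa using (hE.const_sub 1)
      simpa [Function.comp_def, mul_comm, div_eq_mul_inv] using (Real.hasDerivAt_log (ne_of_gt (hpos1 x hx))).comp x hu
    have h2 : HasDerivAt (fun P => Real.log (1 + K * Real.exp (-a*P)))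
        ((-a * K * Real.exp (-a*x)) / (1 + K * Real.exp (-a*x))) x := by
      have hv : HasDerivAt (fun P : ℝ => 1 + K * Real.exp (-a*P)) (-a * K * Real.exp (-a*x)) x := by
        simpa [mul_comm, mul_assoc, mul_left_comm] using ((hE.const_mul K).const_add 1)
      simpa [Function.comp_def, mul_comm, mul_assoc, mul_left_comm, div_eq_mul_inv, neg_div] using (Real.hasDerivAt_log (ne_of_gt (hpos2 x))).comp x hv
    have := h1.sub h2
    refine this.congr_deriv ?_
    have he : Real.exp (-a*x) = (Real.exp (a*x))⁻¹ := by
      rw [← Real.exp_neg]; ring_nf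
    have hEx : (0:ℝ) < Real.exp (a*x) := Real.exp_pos _
    have h1' : Real.exp (a*x) - 1 > 0 := by
      have h1lt : (1:ℝ) < Real.exp (a*x) := by
        rw [← Real.exp_zero]; exact Real.exp_lt_exp.mpr (mul_pos ha hx)
      linarith
    rw [he]
    field_simp
    ring
  have hderivEq : Set.EqOn (deriv f)
      (fun x => a / (Real.exp (a*x) - 1) + a*K / (Real.exp (a*x) + K)) (Ioi 0) := by
    intro x hx
    exact (hderiv x hx).deriv
  apply StrictAntiOn.strictConcaveOn_of_deriv (convex_Ioi 0)
  · apply ContinuousOn.sub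
    · exact (Real.continuousOn_log.comp (Continuous.continuousOn (by continuity))
        (fun x hx => ne_of_gt (hpos1 x hx)))
    · exact (Real.continuousOn_log.comp (Continuous.continuousOn (by continuity))
        (fun x hx => ne_of_gt (hpos2 x)))
  · rw [interior_Ioi]
    intro x hx y hy hxy
    rw [hderivEq hx, hderivEq hy]
    have hEx : Real.exp (a*x) < Real.exp (a*y) := by
      apply Real.exp_lt_exp.mpr; nlinarith
    have h1x : (1:ℝ) < Real.exp (a*x) := by
      rw [← Real.exp_zero]; exact Real.exp_lt_exp.mpr (mul_pos ha hx)
    have t1 : a / (Real.exp (a*y) - 1) < a / (Real.exp (a*x) - 1) :=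
      div_lt_div_of_pos_left ha (by linarith) (by linarith)
    have t2 : a*K / (Real.exp (a*y) + K) < a*K / (Real.exp (a*x) + K) :=
      div_lt_div_of_pos_left (by positivity) (by positivity) (by linarith)
    linarith

/-- (Lemma 1) For the sigmoidal-like utility `U(P) = c·(1/(1 + e^{-a(P-b)}) − d)` with
`a > 0`, `b > 0`, `c = (1 + e^{ab})/e^{ab}`, `d = 1/(1 + e^{ab})`, the function
`P ↦ log U(P)` is strictly concave on `(0, ∞)`. -/
theorem log_sigmoidal_strictConcave
    (a b c d : ℝ) (ha : 0 < a) (hb : 0 < b)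
    (hc : c = (1 + Real.exp (a * b)) / Real.exp (a * b))
    (hd : d = 1 / (1 + Real.exp (a * b)))
    (U : ℝ → ℝ)
    (hU : ∀ P : ℝ, U P = c * (1 / (1 + Real.exp (-a * (P - b))) - d)) :
    StrictConcaveOn ℝ (Ioi (0 : ℝ)) (fun P => Real.log (U P)) := by
  set K := Real.exp (a * b) with hKdef
  have hK : 0 < K := Real.exp_pos _
  have hconc := log_sigmoidal_aux a K ha hK
  set f : ℝ → ℝ := fun P => Real.log (1 - Real.exp (-a*P)) - Real.log (1 + K * Real.exp (-a*P))
    with hfdef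
  have key : ∀ P ∈ Ioi (0:ℝ), Real.log (U P) = f P := by
    intro P hP
    have hexp : Real.exp (-a * (P - b)) = K * Real.exp (-a * P) := by
      rw [hKdef, ← Real.exp_add]; ring_nf
    have hpos1 : (0:ℝ) < 1 - Real.exp (-a*P) := by
      have : Real.exp (-a*P) < 1 := by
        rw [Real.exp_lt_one_iff]; nlinarith [mem_Ioi.mp hP]
      linarith
    have hpos2 : (0:ℝ) < 1 + K * Real.exp (-a*P) := by positivity
    have hUP : U P = (1 - Real.exp (-a*P)) / (1 + K * Real.exp (-a*P)) := by
      rw [hU, hc, hd, hexp]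
      have h1K : (0:ℝ) < 1 + K := by linarith
      field_simp
      ring
    rw [hUP, Real.log_div (ne_of_gt hpos1) (ne_of_gt hpos2)]
  refine ⟨hconc.1, fun x hx y hy hxy p q hp hq hpq => ?_⟩
  have hmem : p • x + q • y ∈ Ioi (0:ℝ) := hconc.1 hx hy hp.le hq.le hpq
  simp only [key x hx, key y hy, key _ hmem]
  exact hconc.2 hx hy hxy hp hq hpq
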